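/- arXiv:2209.12972 — 3 statements merged into one kernel-verified Lean document; each statement's English description precedes it below -/
import Mathlib

section
/- If the inverter power injection satisfies p_vsi(s) = -(α_g·s·(τ-ρ))/((sτ+1)(sρ+1))·ω_sm(s), and the machine dynamics are ω_sm(s) = -G_machine(s)·(p_ℓ(s) - p_vsi(s)) with G_machine(s) = (1/(2Hs+α_ℓ))/(1 + (1/(2Hs+α_ℓ))·(-α_g/(τs+1))·(-1)) interpreted as G_machine(s) = (τs+1)/((2Hs+α_ℓ)(τs+1)+α_g), then the closed-loop transfer function from -p_ℓ to ω_sm equals the target (sρ+1)/(2Hρs² + (α_ℓρ+2H)s + (α_ℓ+α_g)). -/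
open RatFunc

/-- Frequency shaping: the closed loop from -p_ℓ to ω_sm matches the target. -/
theorem shaping_matches_target (H αℓ αg τ ρ : ℝ)
    (hH : 0 < H) (hαℓ : 0 < αℓ) (hαg : 0 < αg) (hτ : 0 < τ)
    (hρ : 0 ≤ ρ) (hρτ : ρ < τ)
    (pℓ ωsm pvsi : RatFunc ℝ)
    (hpv : pvsi = -(RatFunc.C αg * RatFunc.X * (RatFunc.C τ - RatFunc.C ρ)) /
        ((RatFunc.X * RatFunc.C τ + 1) * (RatFunc.X * RatFunc.C ρ + 1)) * ωsm)
    (hω : ωsm = -((RatFunc.X * RatFunc.C τ + 1) /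
        ((RatFunc.C (2 * H) * RatFunc.X + RatFunc.C αℓ) *
          (RatFunc.X * RatFunc.C τ + 1) + RatFunc.C αg)) * (pℓ - pvsi)) :
    ωsm = (RatFunc.X * RatFunc.C ρ + 1) /
        (RatFunc.C (2 * H * ρ) * RatFunc.X ^ 2 +
          RatFunc.C (αℓ * ρ + 2 * H) * RatFunc.X +
          RatFunc.C (αℓ + αg)) * (-pℓ) := by
  have cast : ∀ p : Polynomial ℝ, p.eval 0 ≠ 0 →
      algebraMap (Polynomial ℝ) (RatFunc ℝ) p ≠ 0 := by
    intro p h hc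
    have hp0 : p = 0 := RatFunc.algebraMap_injective ℝ (by simpa using hc)
    exact h (by simp [hp0])
  have hA : (RatFunc.X * RatFunc.C τ + 1 : RatFunc ℝ) ≠ 0 := by
    have h := cast (Polynomial.X * Polynomial.C τ + 1) (by simp)
    simp only [map_add, map_mul, map_one, RatFunc.algebraMap_X, RatFunc.algebraMap_C] at h
    intro hc
    apply h
    try simp only [map_mul, map_add] at hc
    linear_combination hc
  have hB : (RatFunc.X * RatFunc.C ρ + 1 : RatFunc ℝ) ≠ 0 := by
    have h := cast (Polynomial.X * Polynomial.C ρ + 1) (by simp)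
    simp only [map_add, map_mul, map_one, RatFunc.algebraMap_X, RatFunc.algebraMap_C] at h
    intro hc
    apply h
    try simp only [map_mul, map_add] at hc
    linear_combination hc
  have hD : ((RatFunc.C (2 * H) * RatFunc.X + RatFunc.C αℓ) *
      (RatFunc.X * RatFunc.C τ + 1) + RatFunc.C αg : RatFunc ℝ) ≠ 0 := by
    have h := cast ((Polynomial.C (2*H) * Polynomial.X + Polynomial.C αℓ) *
      (Polynomial.X * Polynomial.C τ + 1) + Polynomial.C αg) (by simp; positivity)
    simp only [map_add, map_mul, map_one, RatFunc.algebraMap_X, RatFunc.algebraMap_C] at h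
    intro hc
    apply h
    try simp only [map_mul, map_add] at hc
    linear_combination hc
  have hQ : (RatFunc.C (2 * H * ρ) * RatFunc.X ^ 2 +
      RatFunc.C (αℓ * ρ + 2 * H) * RatFunc.X + RatFunc.C (αℓ + αg) : RatFunc ℝ) ≠ 0 := by
    have h := cast (Polynomial.C (2*H*ρ) * Polynomial.X ^ 2 +
      Polynomial.C (αℓ*ρ+2*H) * Polynomial.X + Polynomial.C (αℓ+αg)) (by simp; positivity)
    simp only [map_add, map_mul, map_pow, map_one, RatFunc.algebraMap_X, RatFunc.algebraMap_C] at h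
    intro hc
    apply h
    try simp only [map_mul, map_add] at hc
    linear_combination hc
  rw [hpv] at hω
  field_simp at hω
  rw [← neg_div, eq_div_iff (by
    convert hD using 1
    ring)] at hω
  rw [div_mul_eq_mul_div, eq_div_iff hQ]
  apply mul_left_cancel₀ (pow_ne_zero 2 hA)
  simp only [map_add, map_mul] at hω ⊢
  linear_combination (RatFunc.X * RatFunc.C τ + 1) * hω
end

section
/- For ρ in N (i.e., α_g·τ/(b̂·τ+α_g) ≤ ρ < τ), all zeros of -G_vsi(s) = -(k_d s² + k_p s + k_i)/s lie in the closed left half plane; conversely if 0 ≤ ρ < α_g·τ/(b̂·τ+α_g) then k_d < 0 and the quadratic k_d s² + k_p s + k_i has a root with positive real part (the controller is non-minimum phase). -/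
/-- Minimum phase iff ρ ∈ N. -/
theorem minimum_phase_iff (τ ρ αg bhat : ℝ)
    (hτ : 0 < τ) (hρ : 0 ≤ ρ) (hρτ : ρ < τ) (hαg : 0 < αg) (hb : 0 < bhat)
    (kd kp ki : ℝ)
    (hkd : kd = τ * ρ / (αg * (τ - ρ)) - 1 / bhat)
    (hkp : kp = (τ + ρ) / (αg * (τ - ρ)))
    (hki : ki = 1 / (αg * (τ - ρ))) :
    (αg * τ / (bhat * τ + αg) ≤ ρ →
      ∀ z : ℂ, (kd : ℂ) * z ^ 2 + (kp : ℂ) * z + (ki : ℂ) = 0 → z.re ≤ 0) ∧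
    (ρ < αg * τ / (bhat * τ + αg) →
      kd < 0 ∧ ∃ z : ℂ, (kd : ℂ) * z ^ 2 + (kp : ℂ) * z + (ki : ℂ) = 0 ∧
        0 < z.re) := by
  have hτρ : 0 < τ - ρ := by linarith
  have hden : 0 < αg * (τ - ρ) := mul_pos hαg hτρ
  have hden2 : 0 < bhat * τ + αg := by positivity
  have hki' : 0 < ki := by rw [hki]; positivity
  have hkp' : 0 < kp := by rw [hkp]; positivity
  constructor
  · intro hN z hz
    have hkd' : 0 ≤ kd := by
      rw [hkd]
      have h1 : αg * τ ≤ ρ * (bhat * τ + αg) := by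
        have := (div_le_iff₀ hden2).mp hN
        linarith
      rw [sub_nonneg, div_le_div_iff₀ hb hden]
      nlinarith
    set x := z.re
    set y := z.im
    have hre := congrArg Complex.re hz
    have him := congrArg Complex.im hz
    simp [Complex.add_re, Complex.add_im, Complex.mul_re, Complex.mul_im, pow_two] at hre him
    by_contra hx
    push_neg at hx
    have him' : (kd * (x * y + y * x) + kp * y) * y = 0 := by rw [him]; ring
    have hy2 : y * y = 0 := le_antisymm
      (by nlinarith [mul_nonneg (mul_nonneg hkd' hx.le) (mul_self_nonneg y)])
      (mul_self_nonneg y)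
    nlinarith [mul_nonneg hkd' (mul_nonneg hx.le hx.le), hre, hy2]
  · intro hN
    have hkd' : kd < 0 := by
      rw [hkd]
      have h1 : ρ * (bhat * τ + αg) < αg * τ := by
        have := (lt_div_iff₀ hden2).mp hN
        linarith
      rw [sub_neg, div_lt_div_iff₀ hden hb]
      nlinarith
    refine ⟨hkd', ?_⟩
    set D := kp ^ 2 - 4 * kd * ki with hD
    have hDpos : 0 < D := by nlinarith
    set s := Real.sqrt D with hs
    have hs2 : s ^ 2 = D := Real.sq_sqrt hDpos.le
    have hspos : 0 < s := Real.sqrt_pos.mpr hDpos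
    set x := (kp + s) / (-2 * kd) with hx
    have hxpos : 0 < x := by
      apply div_pos (by linarith) (by linarith)
    have hroot : kd * x ^ 2 + kp * x + ki = 0 := by
      rw [hx]
      have hkd0 : kd ≠ 0 := hkd'.ne
      field_simp
      nlinarith [hs2]
    refine ⟨(x : ℂ), ?_, by simpa using hxpos⟩
    have : ((kd * x ^ 2 + kp * x + ki : ℝ) : ℂ) = 0 := by rw [hroot]; norm_num
    push_cast at this
    linear_combination this
end

section
/- The H∞ norm of S(s) = α_g(τ-ρ)s³/((sρ+1)(sτ+1)²), i.e., sup over ω ∈ ℝ of |S(jω)|, equals α_g(τ-ρ)/(τ²ρ), for α_g > 0 and 0 < ρ < τ. -/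
open Filter Topology

/-- The H∞ norm of the sensitivity transfer function. -/
theorem sensitivity_Hinf_norm (αg τ ρ : ℝ)
    (hαg : 0 < αg) (hρ : 0 < ρ) (hρτ : ρ < τ) :
    (⨆ ω : ℝ, αg * (τ - ρ) * |ω| ^ 3 /
        (Real.sqrt (1 + ω ^ 2 * ρ ^ 2) * (1 + ω ^ 2 * τ ^ 2)))
      = αg * (τ - ρ) / (τ ^ 2 * ρ) := by
  have hτ : 0 < τ := hρ.trans hρτ
  have hC : 0 < αg * (τ - ρ) := mul_pos hαg (by linarith)
  set f : ℝ → ℝ := fun ω => αg * (τ - ρ) * |ω| ^ 3 /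
      (Real.sqrt (1 + ω ^ 2 * ρ ^ 2) * (1 + ω ^ 2 * τ ^ 2)) with hf
  set L : ℝ := αg * (τ - ρ) / (τ ^ 2 * ρ) with hL
  have hDpos : ∀ ω : ℝ, 0 < Real.sqrt (1 + ω ^ 2 * ρ ^ 2) * (1 + ω ^ 2 * τ ^ 2) := by
    intro ω
    have h1 : (0:ℝ) < 1 + ω ^ 2 * ρ ^ 2 := by positivity
    have h2 : (0:ℝ) < 1 + ω ^ 2 * τ ^ 2 := by positivity
    exact mul_pos (Real.sqrt_pos.mpr h1) h2
  have hbound : ∀ ω : ℝ, f ω ≤ L := by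
    intro ω
    rw [hf, hL]
    rw [div_le_div_iff₀ (hDpos ω) (by positivity)]
    have h1 : |ω| * ρ ≤ Real.sqrt (1 + ω ^ 2 * ρ ^ 2) := by
      rw [show |ω| * ρ = Real.sqrt ((ω * ρ) ^ 2) by
        rw [Real.sqrt_sq_eq_abs, abs_mul, abs_of_pos hρ]]
      apply Real.sqrt_le_sqrt
      nlinarith [sq_nonneg ω]
    have h2 : ω ^ 2 * τ ^ 2 ≤ 1 + ω ^ 2 * τ ^ 2 := by linarith
    have key : (|ω| * ρ) * (ω ^ 2 * τ ^ 2) ≤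
        Real.sqrt (1 + ω ^ 2 * ρ ^ 2) * (1 + ω ^ 2 * τ ^ 2) :=
      mul_le_mul h1 h2 (by positivity) (Real.sqrt_nonneg _)
    have habs : |ω| ^ 3 = |ω| * ω ^ 2 := by
      rw [pow_succ, sq_abs]; ring
    calc αg * (τ - ρ) * |ω| ^ 3 * (τ ^ 2 * ρ)
        = (αg * (τ - ρ)) * ((|ω| * ρ) * (ω ^ 2 * τ ^ 2)) := by rw [habs]; ring
      _ ≤ (αg * (τ - ρ)) * (Real.sqrt (1 + ω ^ 2 * ρ ^ 2) * (1 + ω ^ 2 * τ ^ 2)) :=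
          mul_le_mul_of_nonneg_left key hC.le
      _ = αg * (τ - ρ) * (Real.sqrt (1 + ω ^ 2 * ρ ^ 2) * (1 + ω ^ 2 * τ ^ 2)) := by ring
  have hbdd : BddAbove (Set.range f) := ⟨L, by rintro x ⟨ω, rfl⟩; exact hbound ω⟩
  have ht : Tendsto f atTop (𝓝 L) := by
    set g : ℝ → ℝ := fun x => αg * (τ - ρ) / (Real.sqrt (x + ρ ^ 2) * (x + τ ^ 2)) with hg
    have h0 : Tendsto (fun ω : ℝ => ω⁻¹ ^ 2) atTop (𝓝 0) := by
      have h := (tendsto_inv_atTop_zero (𝕜 := ℝ)).pow 2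
      rwa [show ((0:ℝ) ^ 2) = 0 by norm_num] at h
    have hgc : ContinuousAt g 0 := by
      apply ContinuousAt.div continuousAt_const
      · exact ((Real.continuous_sqrt.comp (by fun_prop)).mul (by fun_prop)).continuousAt
      · simp only [zero_add, Real.sqrt_sq hρ.le]
        positivity
    have hg0 : g 0 = L := by
      simp only [hg, hL, zero_add, Real.sqrt_sq hρ.le]
      ring_nf
    have hcomp : Tendsto (fun ω : ℝ => g (ω⁻¹ ^ 2)) atTop (𝓝 L) := by
      rw [← hg0]
      exact hgc.tendsto.comp h0
    apply hcomp.congr'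
    filter_upwards [eventually_gt_atTop (0:ℝ)] with ω hω
    have hωne : ω ≠ 0 := ne_of_gt hω
    have habs : |ω| = ω := abs_of_pos hω
    have e1 : ω⁻¹ ^ 2 + ρ ^ 2 = (1 + ω ^ 2 * ρ ^ 2) / ω ^ 2 := by
      field_simp
    have e2 : ω⁻¹ ^ 2 + τ ^ 2 = (1 + ω ^ 2 * τ ^ 2) / ω ^ 2 := by
      field_simp
    have e3 : Real.sqrt ((1 + ω ^ 2 * ρ ^ 2) / ω ^ 2)
        = Real.sqrt (1 + ω ^ 2 * ρ ^ 2) / ω := by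
      rw [Real.sqrt_div (by positivity), Real.sqrt_sq hω.le]
    have hsne : Real.sqrt (1 + ω ^ 2 * ρ ^ 2) ≠ 0 :=
      ne_of_gt (Real.sqrt_pos.mpr (by positivity))
    have hdne : (1:ℝ) + ω ^ 2 * τ ^ 2 ≠ 0 := by positivity
    simp only [hg, hf, e1, e2, e3, habs]
    have hden : Real.sqrt (1 + ω ^ 2 * ρ ^ 2) / ω * ((1 + ω ^ 2 * τ ^ 2) / ω ^ 2)
        = Real.sqrt (1 + ω ^ 2 * ρ ^ 2) * (1 + ω ^ 2 * τ ^ 2) / ω ^ 3 := by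
      field_simp
    rw [hden, div_div_eq_mul_div]
  refine le_antisymm (ciSup_le hbound) ?_
  exact le_of_tendsto ht (Eventually.of_forall fun ω => le_ciSup hbdd ω)
end
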